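/- For k ∈ ℤ and μ ∈ ℝ define λ_k^±(μ) = i(k + μ ∓ √|k+μ|). If μ ∈ (0, 1/4), then for all (k,σ) ≠ (k',σ') in ℤ × {+,-} with (k,σ),(k',σ') ∉ {(1,+),(-1,-),(0,+),(0,-)}, and also between any eigenvalue indexed in that exceptional set and any outside it, one has λ_k^σ(μ) ≠ λ_{k'}^{σ'}(μ), except possibly collisions among the four exceptional eigenvalues themselves. Moreover, λ_k^σ(0) = 0 exactly for (k,σ) ∈ {(1,+),(-1,-),(0,+),(0,-)}, and |λ_k^σ(0)| ≥ 2 - √2 for all other (k,σ). -/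

import Mathlib

private lemma no4mu (μ : ℝ) (hμ0 : 0 < μ) (hμ1 : μ < 1/4) (n : ℤ) : (4:ℝ) * μ ≠ (n:ℝ) := by
  intro h
  have h1 : (0:ℝ) < (n:ℝ) := by rw [← h]; linarith
  have h2 : (n:ℝ) < 1 := by rw [← h]; linarith
  have h1' : 0 < n := by exact_mod_cast h1
  have h2' : n < 1 := by exact_mod_cast h2
  omega

set_option maxHeartbeats 2000000 in
private lemma core (μ : ℝ) (hμ0 : 0 < μ) (hμ1 : μ < 1/4) (k k' : ℤ) (σ σ' : Bool)
    (heq : (k:ℝ) + μ - (if σ then (1:ℝ) else -1) * Real.sqrt |(k:ℝ) + μ|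
         = (k':ℝ) + μ - (if σ' then (1:ℝ) else -1) * Real.sqrt |(k':ℝ) + μ|) :
    (k = k' ∧ σ = σ') ∨
    ((k,σ) ∈ ({(1,true),(-1,false),(0,true),(0,false)} : Set (ℤ × Bool)) ∧
     (k',σ') ∈ ({(1,true),(-1,false),(0,true),(0,false)} : Set (ℤ × Bool))) := by
  set a := Real.sqrt |(k:ℝ) + μ| with hadef
  set b := Real.sqrt |(k':ℝ) + μ| with hbdef
  have hx0 : (k:ℝ) + μ ≠ 0 := by
    intro h; exact no4mu μ hμ0 hμ1 (-4*k) (by push_cast; linarith)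
  have hy0 : (k':ℝ) + μ ≠ 0 := by
    intro h; exact no4mu μ hμ0 hμ1 (-4*k') (by push_cast; linarith)
  have ha : 0 < a := Real.sqrt_pos.2 (abs_pos.2 hx0)
  have hb : 0 < b := Real.sqrt_pos.2 (abs_pos.2 hy0)
  have ha2 : a^2 = |(k:ℝ) + μ| := Real.sq_sqrt (abs_nonneg _)
  have hb2 : b^2 = |(k':ℝ) + μ| := Real.sq_sqrt (abs_nonneg _)
  rcases σ with _ | _ <;> rcases σ' with _ | _
  · -- σ = false, σ' = false : x + a = y + b
    norm_num at heq
    rcases le_or_gt 0 k with hk | hk <;> rcases le_or_gt 0 k' with hk' | hk'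
    · -- k ≥ 0, k' ≥ 0
      have hk0 : (0:ℝ) ≤ (k:ℝ) := by exact_mod_cast hk
      have hk0' : (0:ℝ) ≤ (k':ℝ) := by exact_mod_cast hk'
      have hxa : a^2 = (k:ℝ) + μ := by rw [ha2, abs_of_pos (by linarith)]
      have hyb : b^2 = (k':ℝ) + μ := by rw [hb2, abs_of_pos (by linarith)]
      have hsum : a^2 - b^2 = b - a := by linarith
      have hf : (a - b) * (a + b + 1) = 0 := by linear_combination hsum
      rcases mul_eq_zero.1 hf with h | h
      · have hab : a = b := by linarith
        have hsq : a^2 = b^2 := by rw [hab]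
        have hkk : (k:ℝ) = (k':ℝ) := by linarith
        exact Or.inl ⟨by exact_mod_cast hkk, rfl⟩
      · exfalso; linarith
    · -- k ≥ 0, k' < 0 : a + a² = b - b², force (0,false),(-1,false)
      have hk0 : (0:ℝ) ≤ (k:ℝ) := by exact_mod_cast hk
      have hk1' : (k':ℝ) ≤ -1 := by exact_mod_cast (by omega : k' ≤ -1)
      have hxa : a^2 = (k:ℝ) + μ := by rw [ha2, abs_of_pos (by linarith)]
      have hyb : b^2 = -((k':ℝ) + μ) := by rw [hb2, abs_of_neg (by linarith)]
      have hkey : a + a^2 = b - b^2 := by linarith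
      have hb1 : b < 1 := by
        by_contra hcon; push_neg at hcon
        nlinarith [sq_nonneg a]
      have hkm' : k' = -1 := by
        have h2 : (-2:ℝ) < (k':ℝ) := by nlinarith
        have : (-2:ℤ) < k' := by exact_mod_cast h2
        omega
      have hka : a ≤ 1/4 := by nlinarith [sq_nonneg (2*b - 1), sq_nonneg a]
      have hkm : k = 0 := by
        have h2 : (k:ℝ) < 1 := by nlinarith
        have : k < 1 := by exact_mod_cast h2
        omega
      subst hkm; subst hkm'
      exact Or.inr ⟨by simp, by simp⟩
    · -- k < 0, k' ≥ 0 : symmetric, force (-1,false),(0,false)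
      have hk0' : (0:ℝ) ≤ (k':ℝ) := by exact_mod_cast hk'
      have hk1 : (k:ℝ) ≤ -1 := by exact_mod_cast (by omega : k ≤ -1)
      have hxa : a^2 = -((k:ℝ) + μ) := by rw [ha2, abs_of_neg (by linarith)]
      have hyb : b^2 = (k':ℝ) + μ := by rw [hb2, abs_of_pos (by linarith)]
      have hkey : b + b^2 = a - a^2 := by linarith
      have ha1 : a < 1 := by
        by_contra hcon; push_neg at hcon
        nlinarith [sq_nonneg b]
      have hkm : k = -1 := by
        have h2 : (-2:ℝ) < (k:ℝ) := by nlinarith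
        have : (-2:ℤ) < k := by exact_mod_cast h2
        omega
      have hkb : b ≤ 1/4 := by nlinarith [sq_nonneg (2*a - 1), sq_nonneg b]
      have hkm' : k' = 0 := by
        have h2 : (k':ℝ) < 1 := by nlinarith
        have : k' < 1 := by exact_mod_cast h2
        omega
      subst hkm; subst hkm'
      exact Or.inr ⟨by simp, by simp⟩
    · -- k < 0, k' < 0
      have hk1 : (k:ℝ) ≤ -1 := by exact_mod_cast (by omega : k ≤ -1)
      have hk1' : (k':ℝ) ≤ -1 := by exact_mod_cast (by omega : k' ≤ -1)
      have hxa : a^2 = -((k:ℝ) + μ) := by rw [ha2, abs_of_neg (by linarith)]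
      have hyb : b^2 = -((k':ℝ) + μ) := by rw [hb2, abs_of_neg (by linarith)]
      have hsum : a^2 - b^2 = a - b := by linarith
      have hf : (a - b) * (a + b - 1) = 0 := by linear_combination hsum
      rcases mul_eq_zero.1 hf with h | h
      · have hab : a = b := by linarith
        have hsq : a^2 = b^2 := by rw [hab]
        have hkk : (k:ℝ) = (k':ℝ) := by linarith
        exact Or.inl ⟨by exact_mod_cast hkk, rfl⟩
      · -- a + b = 1 : then k = k' = -1
        have hkm : k = -1 := by
          have h2 : (-2:ℝ) < (k:ℝ) := by nlinarith
          have : (-2:ℤ) < k := by exact_mod_cast h2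
          omega
        have hkm' : k' = -1 := by
          have h2 : (-2:ℝ) < (k':ℝ) := by nlinarith
          have : (-2:ℤ) < k' := by exact_mod_cast h2
          omega
        exact Or.inl ⟨by omega, rfl⟩
  · -- σ = false, σ' = true : x + a = y - b
    norm_num at heq
    rcases le_or_gt 0 k with hk | hk <;> rcases le_or_gt 0 k' with hk' | hk'
    · -- pp : b = a + 1, quantization
      have hk0 : (0:ℝ) ≤ (k:ℝ) := by exact_mod_cast hk
      have hk0' : (0:ℝ) ≤ (k':ℝ) := by exact_mod_cast hk'
      have hxa : a^2 = (k:ℝ) + μ := by rw [ha2, abs_of_pos (by linarith)]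
      have hyb : b^2 = (k':ℝ) + μ := by rw [hb2, abs_of_pos (by linarith)]
      have hsum : b^2 - a^2 = a + b := by linarith
      have hf : (b - a - 1) * (a + b) = 0 := by linear_combination hsum
      rcases mul_eq_zero.1 hf with h | h
      · have hab : b = a + 1 := by linarith
        have hsq : b^2 = a^2 + 2*a + 1 := by rw [hab]; ring
        have h2a : 2*a = (k':ℝ) - k - 1 := by linarith
        have hKsq : ((k':ℝ) - (k:ℝ) - 1)^2 = 4*a^2 := by rw [← h2a]; ring
        have hfin : (4:ℝ)*μ = (((k'-k-1)^2 - 4*k : ℤ):ℝ) := by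
          push_cast; linear_combination -hKsq - 4*hxa
        exact absurd hfin (no4mu μ hμ0 hμ1 _)
      · exfalso; linarith
    · -- pn : impossible
      have hk0 : (0:ℝ) ≤ (k:ℝ) := by exact_mod_cast hk
      have hk1' : (k':ℝ) ≤ -1 := by exact_mod_cast (by omega : k' ≤ -1)
      have hxa : a^2 = (k:ℝ) + μ := by rw [ha2, abs_of_pos (by linarith)]
      have hyb : b^2 = -((k':ℝ) + μ) := by rw [hb2, abs_of_neg (by linarith)]
      exfalso; linarith [sq_nonneg a, sq_nonneg b]
    · -- np : a+b = a²+b² = k'-k ∈ {1,2}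
      have hk0' : (0:ℝ) ≤ (k':ℝ) := by exact_mod_cast hk'
      have hk1 : (k:ℝ) ≤ -1 := by exact_mod_cast (by omega : k ≤ -1)
      have hxa : a^2 = -((k:ℝ) + μ) := by rw [ha2, abs_of_neg (by linarith)]
      have hyb : b^2 = (k':ℝ) + μ := by rw [hb2, abs_of_pos (by linarith)]
      have hn : ((k' - k : ℤ):ℝ) = a + b := by push_cast; linarith
      have hn2 : ((k' - k : ℤ):ℝ) = a^2 + b^2 := by push_cast; linarith
      have h1 : 0 < k' - k := by
        exact_mod_cast (show (0:ℝ) < ((k'-k:ℤ):ℝ) by rw [hn]; linarith)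
      have h2 : k' - k ≤ 2 := by
        by_contra hcon; push_neg at hcon
        have h3 : (3:ℝ) ≤ ((k'-k:ℤ):ℝ) := by exact_mod_cast hcon
        nlinarith [sq_nonneg (a - b)]
      have hcase : k' - k = 1 ∨ k' - k = 2 := by omega
      rcases hcase with h | h
      · exfalso
        have hna : a + b = 1 := by rw [h] at hn; exact_mod_cast hn.symm
        have hnb : a^2 + b^2 = 1 := by rw [h] at hn2; exact_mod_cast hn2.symm
        nlinarith [mul_pos ha hb]
      · have hna : a + b = 2 := by
          have hh : ((k'-k:ℤ):ℝ) = ((2:ℤ):ℝ) := by rw [h]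
          rw [hn] at hh; exact_mod_cast hh
        have hnb : a^2 + b^2 = 2 := by
          have hh : ((k'-k:ℤ):ℝ) = ((2:ℤ):ℝ) := by rw [h]
          rw [hn2] at hh; exact_mod_cast hh
        have hsq0 : (a - 1)^2 + (b - 1)^2 = 0 := by linear_combination hnb - 2*hna
        have hb1 : b = 1 := by
          have h0 : (b - 1)^2 = 0 :=
            le_antisymm (by nlinarith [sq_nonneg (a-1)]) (sq_nonneg _)
          have := pow_eq_zero_iff (n := 2) (by norm_num) |>.1 h0
          linarith
        have hfin : (4:ℝ)*μ = ((4 - 4*k' : ℤ):ℝ) := by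
          push_cast
          have hy1 : (k':ℝ) + μ = 1 := by rw [← hyb, hb1]; norm_num
          linarith
        exact absurd hfin (no4mu μ hμ0 hμ1 _)
    · -- nn : a = b + 1, quantization
      have hk1 : (k:ℝ) ≤ -1 := by exact_mod_cast (by omega : k ≤ -1)
      have hk1' : (k':ℝ) ≤ -1 := by exact_mod_cast (by omega : k' ≤ -1)
      have hxa : a^2 = -((k:ℝ) + μ) := by rw [ha2, abs_of_neg (by linarith)]
      have hyb : b^2 = -((k':ℝ) + μ) := by rw [hb2, abs_of_neg (by linarith)]
      have hsum : a^2 - b^2 = a + b := by linarith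
      have hf : (a - b - 1) * (a + b) = 0 := by linear_combination hsum
      rcases mul_eq_zero.1 hf with h | h
      · have hab : a = b + 1 := by linarith
        have hsq : a^2 = b^2 + 2*b + 1 := by rw [hab]; ring
        have h2b : 2*b = (k':ℝ) - k - 1 := by linarith
        have hKsq : ((k':ℝ) - (k:ℝ) - 1)^2 = 4*b^2 := by rw [← h2b]; ring
        have hfin : (4:ℝ)*μ = ((-4*k' - (k'-k-1)^2 : ℤ):ℝ) := by
          push_cast; linear_combination hKsq + 4*hyb
        exact absurd hfin (no4mu μ hμ0 hμ1 _)
      · exfalso; linarith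
  · -- σ = true, σ' = false : x - a = y + b
    norm_num at heq
    rcases le_or_gt 0 k with hk | hk <;> rcases le_or_gt 0 k' with hk' | hk'
    · -- pp : a = b + 1, quantization
      have hk0 : (0:ℝ) ≤ (k:ℝ) := by exact_mod_cast hk
      have hk0' : (0:ℝ) ≤ (k':ℝ) := by exact_mod_cast hk'
      have hxa : a^2 = (k:ℝ) + μ := by rw [ha2, abs_of_pos (by linarith)]
      have hyb : b^2 = (k':ℝ) + μ := by rw [hb2, abs_of_pos (by linarith)]
      have hsum : a^2 - b^2 = a + b := by linarith
      have hf : (a - b - 1) * (a + b) = 0 := by linear_combination hsum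
      rcases mul_eq_zero.1 hf with h | h
      · have hab : a = b + 1 := by linarith
        have hsq : a^2 = b^2 + 2*b + 1 := by rw [hab]; ring
        have h2b : 2*b = (k:ℝ) - k' - 1 := by linarith
        have hKsq : ((k:ℝ) - (k':ℝ) - 1)^2 = 4*b^2 := by rw [← h2b]; ring
        have hfin : (4:ℝ)*μ = (((k-k'-1)^2 - 4*k' : ℤ):ℝ) := by
          push_cast; linear_combination -hKsq - 4*hyb
        exact absurd hfin (no4mu μ hμ0 hμ1 _)
      · exfalso; linarith
    · -- pn : a+b = a²+b² = k-k' ∈ {1,2}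
      have hk0 : (0:ℝ) ≤ (k:ℝ) := by exact_mod_cast hk
      have hk1' : (k':ℝ) ≤ -1 := by exact_mod_cast (by omega : k' ≤ -1)
      have hxa : a^2 = (k:ℝ) + μ := by rw [ha2, abs_of_pos (by linarith)]
      have hyb : b^2 = -((k':ℝ) + μ) := by rw [hb2, abs_of_neg (by linarith)]
      have hn : ((k - k' : ℤ):ℝ) = a + b := by push_cast; linarith
      have hn2 : ((k - k' : ℤ):ℝ) = a^2 + b^2 := by push_cast; linarith
      have h1 : 0 < k - k' := by
        exact_mod_cast (show (0:ℝ) < ((k-k':ℤ):ℝ) by rw [hn]; linarith)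
      have h2 : k - k' ≤ 2 := by
        by_contra hcon; push_neg at hcon
        have h3 : (3:ℝ) ≤ ((k-k':ℤ):ℝ) := by exact_mod_cast hcon
        nlinarith [sq_nonneg (a - b)]
      have hcase : k - k' = 1 ∨ k - k' = 2 := by omega
      rcases hcase with h | h
      · exfalso
        have hna : a + b = 1 := by rw [h] at hn; exact_mod_cast hn.symm
        have hnb : a^2 + b^2 = 1 := by rw [h] at hn2; exact_mod_cast hn2.symm
        nlinarith [mul_pos ha hb]
      · have hna : a + b = 2 := by
          have hh : ((k-k':ℤ):ℝ) = ((2:ℤ):ℝ) := by rw [h]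
          rw [hn] at hh; exact_mod_cast hh
        have hnb : a^2 + b^2 = 2 := by
          have hh : ((k-k':ℤ):ℝ) = ((2:ℤ):ℝ) := by rw [h]
          rw [hn2] at hh; exact_mod_cast hh
        have hsq0 : (a - 1)^2 + (b - 1)^2 = 0 := by linear_combination hnb - 2*hna
        have ha1 : a = 1 := by
          have h0 : (a - 1)^2 = 0 :=
            le_antisymm (by nlinarith [sq_nonneg (b-1)]) (sq_nonneg _)
          have := pow_eq_zero_iff (n := 2) (by norm_num) |>.1 h0
          linarith
        have hfin : (4:ℝ)*μ = ((4 - 4*k : ℤ):ℝ) := by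
          push_cast
          have hx1 : (k:ℝ) + μ = 1 := by rw [← hxa, ha1]; norm_num
          linarith
        exact absurd hfin (no4mu μ hμ0 hμ1 _)
    · -- np : impossible
      have hk0' : (0:ℝ) ≤ (k':ℝ) := by exact_mod_cast hk'
      have hk1 : (k:ℝ) ≤ -1 := by exact_mod_cast (by omega : k ≤ -1)
      have hxa : a^2 = -((k:ℝ) + μ) := by rw [ha2, abs_of_neg (by linarith)]
      have hyb : b^2 = (k':ℝ) + μ := by rw [hb2, abs_of_pos (by linarith)]
      exfalso; linarith [sq_nonneg a, sq_nonneg b]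
    · -- nn : b = a + 1, quantization
      have hk1 : (k:ℝ) ≤ -1 := by exact_mod_cast (by omega : k ≤ -1)
      have hk1' : (k':ℝ) ≤ -1 := by exact_mod_cast (by omega : k' ≤ -1)
      have hxa : a^2 = -((k:ℝ) + μ) := by rw [ha2, abs_of_neg (by linarith)]
      have hyb : b^2 = -((k':ℝ) + μ) := by rw [hb2, abs_of_neg (by linarith)]
      have hsum : b^2 - a^2 = a + b := by linarith
      have hf : (b - a - 1) * (a + b) = 0 := by linear_combination hsum
      rcases mul_eq_zero.1 hf with h | h
      · have hab : b = a + 1 := by linarith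
        have hsq : b^2 = a^2 + 2*a + 1 := by rw [hab]; ring
        have h2a : 2*a = (k:ℝ) - k' - 1 := by linarith
        have hKsq : ((k:ℝ) - (k':ℝ) - 1)^2 = 4*a^2 := by rw [← h2a]; ring
        have hfin : (4:ℝ)*μ = ((-4*k - (k-k'-1)^2 : ℤ):ℝ) := by
          push_cast; linear_combination hKsq + 4*hxa
        exact absurd hfin (no4mu μ hμ0 hμ1 _)
      · exfalso; linarith
  · -- σ = true, σ' = true : x - a = y - b
    norm_num at heq
    rcases le_or_gt 0 k with hk | hk <;> rcases le_or_gt 0 k' with hk' | hk'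
    · -- pp
      have hk0 : (0:ℝ) ≤ (k:ℝ) := by exact_mod_cast hk
      have hk0' : (0:ℝ) ≤ (k':ℝ) := by exact_mod_cast hk'
      have hxa : a^2 = (k:ℝ) + μ := by rw [ha2, abs_of_pos (by linarith)]
      have hyb : b^2 = (k':ℝ) + μ := by rw [hb2, abs_of_pos (by linarith)]
      have hsum : a^2 - b^2 = a - b := by linarith
      have hf : (a - b) * (a + b - 1) = 0 := by linear_combination hsum
      rcases mul_eq_zero.1 hf with h | h
      · have hab : a = b := by linarith
        have hsq : a^2 = b^2 := by rw [hab]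
        have hkk : (k:ℝ) = (k':ℝ) := by linarith
        exact Or.inl ⟨by exact_mod_cast hkk, rfl⟩
      · -- a + b = 1 : then k = k' = 0
        have hkm : k = 0 := by
          have h2 : (k:ℝ) < 1 := by nlinarith
          have : k < 1 := by exact_mod_cast h2
          omega
        have hkm' : k' = 0 := by
          have h2 : (k':ℝ) < 1 := by nlinarith
          have : k' < 1 := by exact_mod_cast h2
          omega
        exact Or.inl ⟨by omega, rfl⟩
    · -- pn : impossible
      have hk0 : (0:ℝ) ≤ (k:ℝ) := by exact_mod_cast hk
      have hk1' : (k':ℝ) ≤ -1 := by exact_mod_cast (by omega : k' ≤ -1)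
      have hxa : a^2 = (k:ℝ) + μ := by rw [ha2, abs_of_pos (by linarith)]
      have hyb : b^2 = -((k':ℝ) + μ) := by rw [hb2, abs_of_neg (by linarith)]
      have hb34 : 3/4 ≤ b^2 := by linarith
      exfalso; nlinarith [sq_nonneg (2*a - 1)]
    · -- np : impossible
      have hk0' : (0:ℝ) ≤ (k':ℝ) := by exact_mod_cast hk'
      have hk1 : (k:ℝ) ≤ -1 := by exact_mod_cast (by omega : k ≤ -1)
      have hxa : a^2 = -((k:ℝ) + μ) := by rw [ha2, abs_of_neg (by linarith)]
      have hyb : b^2 = (k':ℝ) + μ := by rw [hb2, abs_of_pos (by linarith)]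
      have ha34 : 3/4 ≤ a^2 := by linarith
      exfalso; nlinarith [sq_nonneg (2*b - 1)]
    · -- nn
      have hk1 : (k:ℝ) ≤ -1 := by exact_mod_cast (by omega : k ≤ -1)
      have hk1' : (k':ℝ) ≤ -1 := by exact_mod_cast (by omega : k' ≤ -1)
      have hxa : a^2 = -((k:ℝ) + μ) := by rw [ha2, abs_of_neg (by linarith)]
      have hyb : b^2 = -((k':ℝ) + μ) := by rw [hb2, abs_of_neg (by linarith)]
      have hsum : b^2 - a^2 = a - b := by linarith
      have hf : (a - b) * (a + b + 1) = 0 := by linear_combination -hsum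
      rcases mul_eq_zero.1 hf with h | h
      · have hab : a = b := by linarith
        have hsq : a^2 = b^2 := by rw [hab]
        have hkk : (k:ℝ) = (k':ℝ) := by linarith
        exact Or.inl ⟨by exact_mod_cast hkk, rfl⟩
      · exfalso; linarith

private lemma sqlem {a : ℝ} (h : Real.sqrt 2 ≤ a) : 2 - Real.sqrt 2 ≤ a^2 - a := by
  have h2 : (Real.sqrt 2)^2 = 2 := Real.sq_sqrt (by norm_num)
  have h0 : 0 ≤ Real.sqrt 2 := Real.sqrt_nonneg 2
  have h1 : 1 ≤ Real.sqrt 2 := by nlinarith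
  nlinarith [mul_nonneg (sub_nonneg.2 h) (by linarith : (0:ℝ) ≤ a + Real.sqrt 2 - 1)]

private lemma s2le2 : Real.sqrt 2 ≤ 2 := by
  have h2 : (Real.sqrt 2)^2 = 2 := Real.sq_sqrt (by norm_num)
  nlinarith [Real.sqrt_nonneg 2]

set_option maxHeartbeats 1000000 in
/-- Separation of the eigenvalues λ_k^±(μ) = i(k+μ ∓ √|k+μ|): for μ ∈ (0,1/4)
no collisions occur except possibly among the four exceptional eigenvalues
indexed by Σ = {(1,+),(-1,-),(0,+),(0,-)}; at μ = 0 exactly the exceptional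
ones vanish and all the others have modulus at least 2 - √2.
Here `true` stands for the sign + and `false` for -. -/
theorem eigenvalue_separation
    (lam : ℤ → Bool → ℝ → ℂ)
    (hlam : ∀ (k : ℤ) (σ : Bool) (μ : ℝ), lam k σ μ =
      Complex.I * ((((k : ℝ) + μ - (if σ then 1 else -1) * Real.sqrt |(k : ℝ) + μ|) : ℝ) : ℂ))
    (S : Set (ℤ × Bool))
    (hS : S = {(1, true), (-1, false), (0, true), (0, false)}) :
    (∀ μ : ℝ, μ ∈ Set.Ioo (0 : ℝ) (1/4) → ∀ (k k' : ℤ) (σ σ' : Bool),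
      (k, σ) ≠ (k', σ') → ¬((k, σ) ∈ S ∧ (k', σ') ∈ S) →
      lam k σ μ ≠ lam k' σ' μ) ∧
    (∀ (k : ℤ) (σ : Bool), lam k σ 0 = 0 ↔ (k, σ) ∈ S) ∧
    (∀ (k : ℤ) (σ : Bool), (k, σ) ∉ S → 2 - Real.sqrt 2 ≤ ‖lam k σ 0‖) := by
  subst hS
  refine ⟨?_, ?_, ?_⟩
  · -- part 1
    intro μ hμ k k' σ σ' hne hnS h
    rw [hlam, hlam] at h
    have hr := mul_left_cancel₀ Complex.I_ne_zero h
    have hr' : (k:ℝ) + μ - (if σ then (1:ℝ) else -1) * Real.sqrt |(k:ℝ) + μ|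
             = (k':ℝ) + μ - (if σ' then (1:ℝ) else -1) * Real.sqrt |(k':ℝ) + μ| := by
      exact_mod_cast hr
    rcases core μ hμ.1 hμ.2 k k' σ σ' hr' with ⟨h1, h2⟩ | hmem
    · exact hne (by rw [h1, h2])
    · exact hnS hmem
  · -- part 2
    intro k σ
    rw [hlam]
    constructor
    · intro h
      have h0 : ((((k:ℝ) + 0 - (if σ then (1:ℝ) else -1) * Real.sqrt |(k:ℝ) + 0|) : ℝ) : ℂ) = 0 := by
        rcases mul_eq_zero.1 h with h' | h'
        · exact absurd h' Complex.I_ne_zero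
        · exact h'
      have hr : (k:ℝ) + 0 - (if σ then (1:ℝ) else -1) * Real.sqrt |(k:ℝ) + 0| = 0 := by
        exact_mod_cast h0
      rw [add_zero] at hr
      set a := Real.sqrt |(k:ℝ)| with hadef
      have ha2 : a^2 = |(k:ℝ)| := Real.sq_sqrt (abs_nonneg _)
      have ha0 : 0 ≤ a := Real.sqrt_nonneg _
      rcases σ with _ | _
      · -- σ = false : k = -a
        norm_num at hr
        have hak : a = -(k:ℝ) := by linarith
        have hkneg : k ≤ 0 := by
          have hh : (k:ℝ) ≤ 0 := by linarith
          exact_mod_cast hh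
        have hk2 : (k:ℝ)^2 = |(k:ℝ)| := by rw [← ha2, hak]; ring
        have hZ : k^2 = |k| := by exact_mod_cast hk2
        have habsz : |k| = -k := abs_of_nonpos hkneg
        have hmul : k * (k + 1) = 0 := by linear_combination hZ + habsz
        rcases mul_eq_zero.1 hmul with h' | h'
        · subst h'; simp
        · have : k = -1 := by omega
          subst this; simp
      · -- σ = true : k = a
        norm_num at hr
        have hak : a = (k:ℝ) := by linarith
        have hkpos : 0 ≤ k := by
          have hh : (0:ℝ) ≤ (k:ℝ) := by linarith
          exact_mod_cast hh
        have hk2 : (k:ℝ)^2 = |(k:ℝ)| := by rw [← ha2, hak]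
        have hZ : k^2 = |k| := by exact_mod_cast hk2
        have habsz : |k| = k := abs_of_nonneg hkpos
        have hmul : k * (k - 1) = 0 := by linear_combination hZ + habsz
        rcases mul_eq_zero.1 hmul with h' | h'
        · subst h'; simp
        · have : k = 1 := by omega
          subst this; simp
    · intro h
      simp only [Set.mem_insert_iff, Set.mem_singleton_iff, Prod.mk.injEq] at h
      rcases h with ⟨h1,h2⟩|⟨h1,h2⟩|⟨h1,h2⟩|⟨h1,h2⟩ <;> subst h1 <;> subst h2 <;>
        norm_num [Real.sqrt_one, Real.sqrt_zero]
  · -- part 3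
    intro k σ hnS
    rw [hlam]
    rw [norm_mul, Complex.norm_I, one_mul, Complex.norm_real, Real.norm_eq_abs]
    simp only [add_zero]
    set a := Real.sqrt |(k:ℝ)| with hadef
    have ha2 : a^2 = |(k:ℝ)| := Real.sq_sqrt (abs_nonneg _)
    have ha0 : 0 ≤ a := Real.sqrt_nonneg _
    have hs0 : 0 ≤ Real.sqrt 2 := Real.sqrt_nonneg 2
    rcases σ with _ | _
    · -- σ = false : value k + a
      simp only [Set.mem_insert_iff, Set.mem_singleton_iff, Prod.mk.injEq] at hnS
      push_neg at hnS
      have hk1 : k ≠ -1 := by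
        intro hh; exact absurd (hnS.2.1) (by simp [hh])
      have hk0 : k ≠ 0 := by
        intro hh; exact absurd (hnS.2.2.2) (by simp [hh])
      norm_num
      rcases (by omega : 1 ≤ k ∨ k ≤ -2) with hk | hk
      · have hkR : (1:ℝ) ≤ (k:ℝ) := by exact_mod_cast hk
        have hka : a^2 = (k:ℝ) := by rw [ha2, abs_of_nonneg (by linarith)]
        have ha1 : 1 ≤ a := by nlinarith
        have key : 2 - Real.sqrt 2 ≤ (k:ℝ) + a := by nlinarith
        linarith [le_abs_self ((k:ℝ) + a)]
      · have hkR : (k:ℝ) ≤ -2 := by exact_mod_cast hk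
        have hka : a^2 = -(k:ℝ) := by rw [ha2, abs_of_neg (by linarith)]
        have hsa : Real.sqrt 2 ≤ a := by
          rw [hadef]
          have : Real.sqrt 2 ≤ Real.sqrt |(k:ℝ)| :=
            Real.sqrt_le_sqrt (by rw [abs_of_neg (by linarith)]; linarith)
          exact this
        have key : 2 - Real.sqrt 2 ≤ -((k:ℝ) + a) := by
          have := sqlem hsa
          nlinarith
        linarith [neg_le_abs ((k:ℝ) + a)]
    · -- σ = true : value k - a
      simp only [Set.mem_insert_iff, Set.mem_singleton_iff, Prod.mk.injEq] at hnS
      push_neg at hnS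
      have hk1 : k ≠ 1 := by
        intro hh; exact absurd (hnS.1) (by simp [hh])
      have hk0 : k ≠ 0 := by
        intro hh; exact absurd (hnS.2.2.1) (by simp [hh])
      norm_num
      rcases (by omega : 2 ≤ k ∨ k ≤ -1) with hk | hk
      · have hkR : (2:ℝ) ≤ (k:ℝ) := by exact_mod_cast hk
        have hka : a^2 = (k:ℝ) := by rw [ha2, abs_of_nonneg (by linarith)]
        have hsa : Real.sqrt 2 ≤ a := by
          rw [hadef]
          exact Real.sqrt_le_sqrt (by rw [abs_of_nonneg (by linarith)]; linarith)
        have key : 2 - Real.sqrt 2 ≤ (k:ℝ) - a := by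
          have := sqlem hsa
          nlinarith
        linarith [le_abs_self ((k:ℝ) - a)]
      · have hkR : (k:ℝ) ≤ -1 := by exact_mod_cast hk
        have hka : a^2 = -(k:ℝ) := by rw [ha2, abs_of_neg (by linarith)]
        have ha1 : 1 ≤ a := by nlinarith
        have key : 2 - Real.sqrt 2 ≤ -((k:ℝ) - a) := by nlinarith [s2le2]
        linarith [neg_le_abs ((k:ℝ) - a)]
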